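/- arXiv:1509.07884 — 2 statements merged into one kernel-verified Lean document; each statement's English description precedes it below -/
import Mathlib

section
/- Fix v ∈ ℝ^{n+1} with v_1 < v_2 < ⋯ < v_{n+1}. Then v is a vertex of Perm(v), the feasible cone of Perm(v) at v is the cone generated by the vectors e_1 − e_2, e_2 − e_3, …, e_n − e_{n+1}, and for each S ⊆ [n] the set F_S := Perm(v) ∩ (v + span{e_i − e_{i+1} : i ∈ S}) is a face of Perm(v) of dimension |S|; moreover S ↦ F_S is a bijection from the subsets of [n] onto the faces of Perm(v) that contain the vertex v. -/
open scoped Pointwise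
open Filter MeasureTheory

/-- Number of lattice points (points of `ℤ^D`) in a subset of `ℝ^D`. -/
noncomputable def latticePts {D : ℕ} (A : Set (Fin D → ℝ)) : ℕ :=
  {z : Fin D → ℤ | (fun i => (z i : ℝ)) ∈ A}.ncard

/-- A polytope: convex hull of a nonempty finite set of points. -/
def IsPolytope {D : ℕ} (P : Set (Fin D → ℝ)) : Prop :=
  ∃ V : Finset (Fin D → ℝ), V.Nonempty ∧ P = convexHull ℝ (V : Set (Fin D → ℝ))

/-- An integral polytope: convex hull of a nonempty finite set of lattice points. -/
def IsIntegralPolytope {D : ℕ} (P : Set (Fin D → ℝ)) : Prop :=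
  ∃ V : Finset (Fin D → ℝ), V.Nonempty ∧ (∀ x ∈ V, ∀ i, ∃ z : ℤ, x i = (z : ℝ)) ∧
    P = convexHull ℝ (V : Set (Fin D → ℝ))

/-- `F` is a (nonempty, exposed) face of `P`: the set of maximizers over `P`
of some linear functional. -/
def IsFaceOf {D : ℕ} (F P : Set (Fin D → ℝ)) : Prop :=
  F.Nonempty ∧ ∃ c : Fin D → ℝ, F = {x ∈ P | ∀ y ∈ P, ∑ i, c i * y i ≤ ∑ i, c i * x i}

/-- Dimension of a polytope: the rank of the direction space of its affine span. -/
noncomputable def polyDim {D : ℕ} (P : Set (Fin D → ℝ)) : ℕ :=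
  Module.finrank ℝ (vectorSpan ℝ P)

/-- The usual permutohedron `Perm(v)`: convex hull of all coordinate permutations of `v`. -/
def permutohedron {n : ℕ} (v : Fin (n+1) → ℝ) : Set (Fin (n+1) → ℝ) :=
  convexHull ℝ {x | ∃ σ : Equiv.Perm (Fin (n+1)), x = v ∘ ⇑σ}

/-- The vector `e_i - e_{i+1}` (1-indexed: index `i : Fin n` corresponds to `i+1 ∈ [n]`). -/
def eDiff {n : ℕ} (i : Fin n) : Fin (n+1) → ℝ :=
  fun k => (if k = i.castSucc then 1 else 0) - (if k = i.succ then 1 else 0)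

/-- The face `F_S = Perm(v) ∩ (v + span{e_i - e_{i+1} : i ∈ S})`. -/
def faceS {n : ℕ} (v : Fin (n+1) → ℝ) (S : Finset (Fin n)) : Set (Fin (n+1) → ℝ) :=
  permutohedron v ∩ {x | x - v ∈ Submodule.span ℝ (eDiff '' (S : Set (Fin n)))}

/-- Feasible cone of a face `F` of `P`:
`{u : x + δu ∈ P for every x ∈ F and all sufficiently small δ > 0}`. -/
def fcone {D : ℕ} (F P : Set (Fin D → ℝ)) : Set (Fin D → ℝ) :=
  {u | ∀ x ∈ F, ∃ ε > (0:ℝ), ∀ δ : ℝ, 0 < δ → δ < ε → x + δ • u ∈ P}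

namespace PermAux

variable {n : ℕ}
/-- prefix-sum linear functional: sum of coordinates with index < m. -/
def preL (n m : ℕ) : (Fin (n+1) → ℝ) →ₗ[ℝ] ℝ where
  toFun x := ∑ k ∈ Finset.univ.filter (fun k : Fin (n+1) => (k : ℕ) < m), x k
  map_add' x y := by simp [Finset.sum_add_distrib]
  map_smul' r x := by simp [Finset.mul_sum]

lemma preL_total (x : Fin (n+1) → ℝ) : preL n (n+1) x = ∑ k, x k := by
  simp only [preL, LinearMap.coe_mk, AddHom.coe_mk]
  rw [Finset.filter_true_of_mem]
  intro k _; exact k.is_lt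

lemma preL_zero_m (x : Fin (n+1) → ℝ) : preL n 0 x = 0 := by
  simp [preL]

lemma filter_succ_eq {m : ℕ} (h : m < n+1) :
    (Finset.univ.filter (fun k : Fin (n+1) => (k : ℕ) < m+1)) =
      insert ⟨m, h⟩ (Finset.univ.filter (fun k : Fin (n+1) => (k : ℕ) < m)) := by
  ext k
  simp only [Finset.mem_filter, Finset.mem_univ, true_and, Finset.mem_insert]
  constructor
  · intro hk
    rcases Nat.lt_succ_iff_lt_or_eq.mp hk with h' | h'
    · exact Or.inr h'
    · exact Or.inl (Fin.ext h')
  · rintro (rfl | h')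
    · exact Nat.lt_succ_self m
    · exact Nat.lt_succ_of_lt h'

lemma preL_succ {m : ℕ} (h : m < n+1) (x : Fin (n+1) → ℝ) :
    preL n (m+1) x = preL n m x + x ⟨m, h⟩ := by
  simp only [preL, LinearMap.coe_mk, AddHom.coe_mk]
  rw [filter_succ_eq h, Finset.sum_insert (by simp)]
  ring

lemma preL_ge_total {m : ℕ} (h : n+1 ≤ m) (x : Fin (n+1) → ℝ) :
    preL n m x = ∑ k, x k := by
  simp only [preL, LinearMap.coe_mk, AddHom.coe_mk]
  rw [Finset.filter_true_of_mem]
  intro k _; exact lt_of_lt_of_le k.is_lt h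

lemma preL_stable {m : ℕ} (h : n+1 ≤ m) (x : Fin (n+1) → ℝ) :
    preL n m x = preL n (n+1) x := by
  rw [preL_ge_total h, preL_total]

lemma preL_eDiff (m : ℕ) (i : Fin n) :
    preL n m (eDiff i) =
      (if (i : ℕ) < m then (1:ℝ) else 0) - (if (i : ℕ) + 1 < m then 1 else 0) := by
  simp only [preL, LinearMap.coe_mk, AddHom.coe_mk, eDiff]
  rw [Finset.sum_sub_distrib]
  rw [Finset.sum_ite_eq' _ (i.castSucc) (fun _ => (1:ℝ)),
    Finset.sum_ite_eq' _ (i.succ) (fun _ => (1:ℝ))]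
  simp only [Finset.mem_filter, Finset.mem_univ, true_and, Fin.coe_castSucc, Fin.val_succ]

lemma preL_eDiff_idx (j : Fin n) (i : Fin n) :
    preL n ((j : ℕ)+1) (eDiff i) = if i = j then 1 else 0 := by
  rw [preL_eDiff]
  rcases eq_or_ne i j with rfl | hij
  · simp
  · have : (i:ℕ) ≠ (j:ℕ) := fun h => hij (Fin.ext h)
    simp only [if_neg hij]
    rcases lt_or_gt_of_ne this with h | h
    · rw [if_pos (by omega), if_pos (by omega)]; ring
    · rw [if_neg (by omega), if_neg (by omega)]; ring

lemma preL_eDiff_total (i : Fin n) : preL n (n+1) (eDiff i) = 0 := by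
  rw [preL_eDiff]
  have := i.is_lt
  rw [if_pos (by omega), if_pos (by omega)]
  ring

/-- reconstruction: prefix sums determine the vector. -/
lemma eq_of_preL_eq {x y : Fin (n+1) → ℝ}
    (h : ∀ j : Fin n, preL n ((j:ℕ)+1) x = preL n ((j:ℕ)+1) y)
    (htot : preL n (n+1) x = preL n (n+1) y) : x = y := by
  have key : ∀ m, preL n m x = preL n m y := by
    intro m
    rcases Nat.lt_or_ge m (n+2) with hm | hm
    · match m, hm with
      | 0, _ => simp [preL_zero_m]
      | (m+1), hm =>
        rcases Nat.lt_or_ge m n with h' | h'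
        · exact h ⟨m, h'⟩
        · have : m = n := by omega
          subst this; exact htot
    · rw [preL_stable (by omega : n+1 ≤ m) x, preL_stable (by omega : n+1 ≤ m) y, htot]
  funext k
  have h1 := preL_succ k.is_lt x
  have h2 := preL_succ k.is_lt y
  have : x ⟨(k:ℕ), k.is_lt⟩ = y ⟨(k:ℕ), k.is_lt⟩ := by
    have := key ((k:ℕ)+1); have := key (k:ℕ); 
    rw [h1, h2] at *; linarith [key ((k:ℕ)+1), key (k:ℕ)]
  simpa using this


lemma mem_span_eDiff_iff (S : Finset (Fin n)) (u : Fin (n+1) → ℝ) :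
    u ∈ Submodule.span ℝ (eDiff '' (S : Set (Fin n))) ↔
      (preL n (n+1) u = 0 ∧ ∀ j : Fin n, j ∉ S → preL n ((j:ℕ)+1) u = 0) := by
  constructor
  · intro hu
    induction hu using Submodule.span_induction with
    | mem x hx =>
      obtain ⟨i, hiS, rfl⟩ := hx
      refine ⟨preL_eDiff_total i, fun j hj => ?_⟩
      rw [preL_eDiff_idx]
      rw [if_neg]
      rintro rfl; exact hj hiS
    | zero => simp
    | add x y _ _ hx hy =>
      exact ⟨by rw [map_add, hx.1, hy.1, add_zero],
        fun j hj => by rw [map_add, hx.2 j hj, hy.2 j hj, add_zero]⟩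
    | smul r x _ hx =>
      exact ⟨by rw [_root_.map_smul, hx.1, smul_zero],
        fun j hj => by rw [_root_.map_smul, hx.2 j hj, smul_zero]⟩
  · rintro ⟨htot, hj⟩
    have hrepr : u = ∑ i ∈ S, preL n ((i:ℕ)+1) u • eDiff i := by
      apply eq_of_preL_eq
      · intro j
        rw [map_sum]
        simp only [_root_.map_smul, preL_eDiff_idx, smul_eq_mul, mul_ite, mul_one, mul_zero]
        rw [Finset.sum_ite_eq' S j (fun i => preL n ((i:ℕ)+1) u)]
        split
        · rfl
        · exact (hj j (by assumption)).symm ▸ (hj j (by assumption))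
      · rw [map_sum]
        simp only [_root_.map_smul, preL_eDiff_total, smul_eq_mul, mul_zero, Finset.sum_const_zero]
        exact htot
    rw [hrepr]
    exact Submodule.sum_mem _ fun i hi => Submodule.smul_mem _ _
      (Submodule.subset_span ⟨i, hi, rfl⟩)


lemma strictMono_le_apply {m : ℕ} {f : Fin m → Fin (n+1)} (hf : StrictMono f)
    (i : Fin m) : (i : ℕ) ≤ (f i : ℕ) := by
  obtain ⟨k, hk⟩ := i
  induction k with
  | zero => exact Nat.zero_le _
  | succ k ih =>
    have h1 : (⟨k, by omega⟩ : Fin m) < ⟨k+1, hk⟩ := by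
      simp [Fin.lt_def]
    have := hf h1
    have := ih (by omega)
    simp only [Fin.lt_def] at this ⊢
    omega

lemma filter_eq_map_castLE {m : ℕ} (h : m ≤ n+1) :
    Finset.univ.filter (fun k : Fin (n+1) => (k : ℕ) < m) =
      Finset.univ.map (Fin.castLEEmb h) := by
  ext k
  simp only [Finset.mem_filter, Finset.mem_univ, true_and, Finset.mem_map]
  constructor
  · intro hk
    refine ⟨⟨(k : ℕ), hk⟩, ?_⟩
    ext
    simp [Fin.castLEEmb]
  · rintro ⟨i, -, rfl⟩
    simp [Fin.castLEEmb]

lemma preL_eq_sum_castLE {m : ℕ} (h : m ≤ n+1) (x : Fin (n+1) → ℝ) :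
    preL n m x = ∑ i : Fin m, x (Fin.castLE h i) := by
  simp only [preL, LinearMap.coe_mk, AddHom.coe_mk]
  rw [filter_eq_map_castLE h, Finset.sum_map]
  rfl

lemma pre_v_le_sum {v : Fin (n+1) → ℝ} (hv : Monotone v) (T : Finset (Fin (n+1))) :
    preL n T.card v ≤ ∑ t ∈ T, v t := by
  have hT : T.card ≤ n+1 := by
    simpa using Finset.card_le_univ T
  rw [preL_eq_sum_castLE hT]
  have hsum : ∑ t ∈ T, v t = ∑ i : Fin T.card, v (T.orderEmbOfFin rfl i) := by
    rw [← Finset.sum_coe_sort T v]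
    exact (Fintype.sum_equiv (T.orderIsoOfFin rfl).toEquiv _ _ (fun i => rfl)).symm
  rw [hsum]
  apply Finset.sum_le_sum
  intro i _
  apply hv
  rw [Fin.le_def]
  simpa using strictMono_le_apply (T.orderEmbOfFin rfl).strictMono i

lemma perm_pre_le {v : Fin (n+1) → ℝ} (hv : Monotone v) (σ : Equiv.Perm (Fin (n+1)))
    {m : ℕ} (hm : m ≤ n+1) : preL n m v ≤ preL n m (v ∘ ⇑σ) := by
  have h1 : preL n m (v ∘ ⇑σ) =
      ∑ t ∈ (Finset.univ.filter (fun k : Fin (n+1) => (k : ℕ) < m)).image σ, v t := by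
    rw [Finset.sum_image (fun a _ b _ hab => σ.injective hab)]
    rfl
  have hcard : ((Finset.univ.filter (fun k : Fin (n+1) => (k : ℕ) < m)).image σ).card = m := by
    rw [Finset.card_image_of_injective _ σ.injective, filter_eq_map_castLE hm]
    simp
  rw [h1]
  calc preL n m v = preL n ((Finset.univ.filter
      (fun k : Fin (n+1) => (k : ℕ) < m)).image σ).card v := by rw [hcard]
    _ ≤ _ := pre_v_le_sum hv _

lemma hull_pre_le {v : Fin (n+1) → ℝ} (hv : Monotone v) {x : Fin (n+1) → ℝ}
    (hx : x ∈ convexHull ℝ {x | ∃ σ : Equiv.Perm (Fin (n+1)), x = v ∘ ⇑σ})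
    {m : ℕ} (hm : m ≤ n+1) : preL n m v ≤ preL n m x := by
  have : convexHull ℝ {x | ∃ σ : Equiv.Perm (Fin (n+1)), x = v ∘ ⇑σ} ⊆
      {x | preL n m v ≤ preL n m x} := by
    apply convexHull_min
    · rintro y ⟨σ, rfl⟩
      exact perm_pre_le hv σ hm
    · exact convex_halfSpace_ge (preL n m).isLinear _
  exact this hx

lemma hull_total {v : Fin (n+1) → ℝ} {x : Fin (n+1) → ℝ}
    (hx : x ∈ convexHull ℝ {x | ∃ σ : Equiv.Perm (Fin (n+1)), x = v ∘ ⇑σ}) :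
    preL n (n+1) x = preL n (n+1) v := by
  have : convexHull ℝ {x | ∃ σ : Equiv.Perm (Fin (n+1)), x = v ∘ ⇑σ} ⊆
      {x | preL n (n+1) x = preL n (n+1) v} := by
    apply convexHull_min
    · rintro y ⟨σ, rfl⟩
      show preL n (n+1) (v ∘ ⇑σ) = preL n (n+1) v
      rw [preL_total, preL_total]
      exact Equiv.sum_comp σ v
    · exact convex_hyperplane (preL n (n+1)).isLinear _
  exact this hx


lemma range_sum_G (x : Fin (n+1) → ℝ) (m : ℕ) :
    ∑ i ∈ Finset.range m, (if h : i < n+1 then x ⟨i, h⟩ else 0) = preL n m x := by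
  induction m with
  | zero => simp [preL_zero_m]
  | succ m ih =>
    rw [Finset.sum_range_succ, ih]
    rcases Nat.lt_or_ge m (n+1) with h | h
    · rw [dif_pos h, preL_succ h]
    · rw [dif_neg (by omega), preL_stable (by omega : n+1 ≤ m+1),
        preL_stable (by omega : n+1 ≤ m), add_zero]

lemma abel_identity (c x : Fin (n+1) → ℝ) :
    ∑ k, c k * x k = c (Fin.last n) * preL n (n+1) x
      - ∑ j : Fin n, (c j.succ - c j.castSucc) * preL n ((j:ℕ)+1) x := by
  set F : ℕ → ℝ := fun i => c ⟨min i n, by omega⟩ with hF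
  set G : ℕ → ℝ := fun i => if h : i < n+1 then x ⟨i, h⟩ else 0 with hG
  have hL : ∑ k, c k * x k = ∑ i ∈ Finset.range (n+1), F i * G i := by
    rw [← Fin.sum_univ_eq_sum_range (fun i => F i * G i) (n+1)]
    apply Finset.sum_congr rfl
    intro k _
    have h1 : F (k : ℕ) = c k := by
      simp only [hF]
      congr 1
      exact Fin.ext (by simp [Nat.min_eq_left (Nat.lt_succ_iff.mp k.is_lt)])
    have h2 : G (k : ℕ) = x k := by
      simp only [hG]
      rw [dif_pos k.is_lt]
    rw [h1, h2]
  rw [hL]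
  have hparts := Finset.sum_range_by_parts F G (n+1)
  simp only [smul_eq_mul] at hparts
  rw [hparts]
  have hFn : F ((n+1) - 1) = c (Fin.last n) := by
    simp only [hF]
    congr 1
    exact Fin.ext (by simp [Fin.last])
  have hsub : ∑ i ∈ Finset.range ((n+1) - 1), (F (i+1) - F i) * (∑ j ∈ Finset.range (i+1), G j)
      = ∑ j : Fin n, (c j.succ - c j.castSucc) * preL n ((j:ℕ)+1) x := by
    rw [Nat.add_sub_cancel,
      ← Fin.sum_univ_eq_sum_range (fun i => (F (i+1) - F i) * (∑ j ∈ Finset.range (i+1), G j)) n]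
    apply Finset.sum_congr rfl
    intro j _
    have e1 : F ((j : ℕ)+1) = c j.succ := by
      simp only [hF]
      congr 1
      exact Fin.ext (by simp [Nat.min_eq_left (Nat.succ_le_of_lt j.is_lt)])
    have e2 : F (j : ℕ) = c j.castSucc := by
      simp only [hF]
      congr 1
      exact Fin.ext (by simp [Nat.min_eq_left (Nat.le_of_lt j.is_lt)])
    rw [e1, e2, range_sum_G]
  rw [hFn, hsub, range_sum_G]

lemma swap_eq (v : Fin (n+1) → ℝ) (i : Fin n) :
    v ∘ ⇑(Equiv.swap i.castSucc i.succ) = v + (v i.succ - v i.castSucc) • eDiff i := by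
  have hne : i.castSucc ≠ i.succ := (Fin.castSucc_lt_succ (i := i)).ne
  funext k
  simp only [Pi.add_apply, Pi.smul_apply, eDiff, smul_eq_mul, Function.comp_apply]
  rcases eq_or_ne k i.castSucc with rfl | h1
  · rw [Equiv.swap_apply_left, if_pos rfl, if_neg hne]
    ring
  · rcases eq_or_ne k i.succ with rfl | h2
    · rw [Equiv.swap_apply_right, if_pos rfl, if_neg (Ne.symm hne)]
      ring
    · rw [Equiv.swap_apply_of_ne_of_ne h1 h2, if_neg h1, if_neg h2]
      ring

lemma v_mem_hull (v : Fin (n+1) → ℝ) :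
    v ∈ convexHull ℝ {x | ∃ σ : Equiv.Perm (Fin (n+1)), x = v ∘ ⇑σ} :=
  subset_convexHull ℝ _ ⟨1, by simp⟩

lemma swap_mem_hull (v : Fin (n+1) → ℝ) (i : Fin n) :
    v + (v i.succ - v i.castSucc) • eDiff i ∈
      convexHull ℝ {x | ∃ σ : Equiv.Perm (Fin (n+1)), x = v ∘ ⇑σ} := by
  rw [← swap_eq]
  exact subset_convexHull ℝ _ ⟨_, rfl⟩


section WithV

variable {v : Fin (n+1) → ℝ}

lemma key_identity (c : Fin (n+1) → ℝ) {x : Fin (n+1) → ℝ} (hx : x ∈ (convexHull ℝ {x | ∃ σ : Equiv.Perm (Fin (n+1)), x = v ∘ ⇑σ})) :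
    ∑ k, c k * v k - ∑ k, c k * x k =
      ∑ j : Fin n, (c j.succ - c j.castSucc) * (preL n ((j:ℕ)+1) x - preL n ((j:ℕ)+1) v) := by
  rw [abel_identity c x, abel_identity c v, hull_total hx]
  simp only [mul_sub]
  rw [Finset.sum_sub_distrib]
  ring

lemma max_le (hv : Monotone v) {c : Fin (n+1) → ℝ}
    (hc : ∀ j : Fin n, c j.castSucc ≤ c j.succ) {x : Fin (n+1) → ℝ} (hx : x ∈ (convexHull ℝ {x | ∃ σ : Equiv.Perm (Fin (n+1)), x = v ∘ ⇑σ})) :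
    ∑ k, c k * x k ≤ ∑ k, c k * v k := by
  have h := key_identity c hx
  have hnn : ∀ j ∈ (Finset.univ : Finset (Fin n)),
      0 ≤ (c j.succ - c j.castSucc) * (preL n ((j:ℕ)+1) x - preL n ((j:ℕ)+1) v) := by
    intro j _
    apply mul_nonneg (by linarith [hc j])
    have := hull_pre_le hv hx (m := (j:ℕ)+1) (by omega)
    linarith
  nlinarith [Finset.sum_nonneg hnn]

lemma max_eq_iff (hv : Monotone v) {c : Fin (n+1) → ℝ}
    (hc : ∀ j : Fin n, c j.castSucc ≤ c j.succ) {x : Fin (n+1) → ℝ} (hx : x ∈ (convexHull ℝ {x | ∃ σ : Equiv.Perm (Fin (n+1)), x = v ∘ ⇑σ})) :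
    ∑ k, c k * x k = ∑ k, c k * v k ↔
      ∀ j : Fin n, c j.castSucc ≠ c j.succ →
        preL n ((j:ℕ)+1) x = preL n ((j:ℕ)+1) v := by
  have h := key_identity c hx
  have hnn : ∀ j ∈ (Finset.univ : Finset (Fin n)),
      0 ≤ (c j.succ - c j.castSucc) * (preL n ((j:ℕ)+1) x - preL n ((j:ℕ)+1) v) := by
    intro j _
    apply mul_nonneg (by linarith [hc j])
    have := hull_pre_le hv hx (m := (j:ℕ)+1) (by omega)
    linarith
  constructor
  · intro heq j hj
    have hzero : ∑ j : Fin n,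
        (c j.succ - c j.castSucc) * (preL n ((j:ℕ)+1) x - preL n ((j:ℕ)+1) v) = 0 := by
      linarith
    have := (Finset.sum_eq_zero_iff_of_nonneg hnn).mp hzero j (Finset.mem_univ j)
    rcases mul_eq_zero.mp this with h' | h'
    · exact absurd (by linarith : c j.castSucc = c j.succ) hj
    · linarith
  · intro hall
    have : ∑ j : Fin n,
        (c j.succ - c j.castSucc) * (preL n ((j:ℕ)+1) x - preL n ((j:ℕ)+1) v) = 0 := by
      apply Finset.sum_eq_zero
      intro j _
      rcases eq_or_ne (c j.castSucc) (c j.succ) with h' | h'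
      · rw [h']; ring
      · rw [hall j h']; ring
    linarith

lemma span_cond_iff (S : Finset (Fin n)) {x : Fin (n+1) → ℝ} (hx : x ∈ (convexHull ℝ {x | ∃ σ : Equiv.Perm (Fin (n+1)), x = v ∘ ⇑σ})) :
    x - v ∈ Submodule.span ℝ (eDiff '' (S : Set (Fin n))) ↔
      ∀ j : Fin n, j ∉ S → preL n ((j:ℕ)+1) x = preL n ((j:ℕ)+1) v := by
  rw [mem_span_eDiff_iff]
  have htot : preL n (n+1) (x - v) = 0 := by
    rw [map_sub, hull_total hx, sub_self]
  simp only [map_sub, sub_eq_zero]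
  exact ⟨fun h => h.2, fun h => ⟨by rw [hull_total hx], h⟩⟩

/-- the main structural lemma: an exposed face given by an adjacent-monotone functional
whose equality set is `S` equals `Perm(v) ∩ (v + span(eDiff '' S))`. -/
lemma face_form (hv : Monotone v) (c : Fin (n+1) → ℝ)
    (hc : ∀ j : Fin n, c j.castSucc ≤ c j.succ) (S : Finset (Fin n))
    (hS : ∀ j : Fin n, j ∈ S ↔ c j.castSucc = c j.succ) :
    {x ∈ (convexHull ℝ {x | ∃ σ : Equiv.Perm (Fin (n+1)), x = v ∘ ⇑σ}) | ∀ y ∈ (convexHull ℝ {x | ∃ σ : Equiv.Perm (Fin (n+1)), x = v ∘ ⇑σ}), ∑ k, c k * y k ≤ ∑ k, c k * x k} =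
      (convexHull ℝ {x | ∃ σ : Equiv.Perm (Fin (n+1)), x = v ∘ ⇑σ}) ∩ {x | x - v ∈ Submodule.span ℝ (eDiff '' (S : Set (Fin n)))} := by
  ext x
  simp only [Set.mem_setOf_eq, Set.mem_inter_iff]
  constructor
  · rintro ⟨hxP, hmax⟩
    refine ⟨hxP, ?_⟩
    rw [span_cond_iff S hxP]
    have hxv : ∑ k, c k * x k = ∑ k, c k * v k :=
      le_antisymm (max_le hv hc hxP) (hmax v (v_mem_hull v))
    intro j hj
    exact (max_eq_iff hv hc hxP).mp hxv j (fun h => hj ((hS j).mpr h))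
  · rintro ⟨hxP, hspan⟩
    refine ⟨hxP, fun y hy => ?_⟩
    have hxv : ∑ k, c k * x k = ∑ k, c k * v k := by
      rw [max_eq_iff hv hc hxP]
      intro j hj
      exact (span_cond_iff S hxP).mp hspan j (fun h => hj ((hS j).mp h))
    rw [hxv]
    exact max_le hv hc hy

lemma dot_eDiff (c : Fin (n+1) → ℝ) (i : Fin n) :
    ∑ k, c k * eDiff i k = c i.castSucc - c i.succ := by
  simp only [eDiff, mul_sub, mul_ite, mul_one, mul_zero]
  rw [Finset.sum_sub_distrib, Finset.sum_ite_eq' _ i.castSucc c,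
    Finset.sum_ite_eq' _ i.succ c]
  simp

lemma adjacent_mono_of_max (hv : StrictMono v) {c : Fin (n+1) → ℝ}
    (hmax : ∀ y ∈ (convexHull ℝ {x | ∃ σ : Equiv.Perm (Fin (n+1)), x = v ∘ ⇑σ}), ∑ k, c k * y k ≤ ∑ k, c k * v k) (j : Fin n) :
    c j.castSucc ≤ c j.succ := by
  have hy := hmax _ (swap_mem_hull v j)
  have hexp : ∑ k, c k * (v + (v j.succ - v j.castSucc) • eDiff j) k =
      ∑ k, c k * v k + (v j.succ - v j.castSucc) * (c j.castSucc - c j.succ) := by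
    simp only [Pi.add_apply, Pi.smul_apply, smul_eq_mul, mul_add]
    rw [Finset.sum_add_distrib]
    have : ∀ k, c k * ((v j.succ - v j.castSucc) * eDiff j k) =
        (v j.succ - v j.castSucc) * (c k * eDiff j k) := fun k => by ring
    simp only [this]
    rw [← Finset.mul_sum, dot_eDiff c j]
  rw [hexp] at hy
  have hg : 0 < v j.succ - v j.castSucc := by
    have := hv (Fin.castSucc_lt_succ (i := j))
    linarith
  nlinarith

lemma add_sum_mem_hull (t : Fin n → ℝ) (ht : ∀ i, 0 ≤ t i) (hsum : ∑ i, t i ≤ 1) :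
    v + ∑ i, t i • ((v i.succ - v i.castSucc) • eDiff i) ∈ (convexHull ℝ {x | ∃ σ : Equiv.Perm (Fin (n+1)), x = v ∘ ⇑σ}) := by
  classical
  set W : Option (Fin n) → ℝ := fun o => Option.elim o (1 - ∑ i, t i) t with hW
  set Z : Option (Fin n) → (Fin (n+1) → ℝ) :=
    fun o => Option.elim o v (fun i => v + (v i.succ - v i.castSucc) • eDiff i) with hZ
  have hmem := (convex_convexHull ℝ {x | ∃ σ : Equiv.Perm (Fin (n+1)), x = v ∘ ⇑σ}).sum_mem
    (t := (Finset.univ : Finset (Option (Fin n)))) (w := W) (z := Z)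
    (fun o _ => by
      rcases o with _ | i
      · simp only [hW, Option.elim]; linarith
      · simp only [hW, Option.elim]; exact ht i)
    (by
      rw [Fintype.sum_option]
      simp only [hW, Option.elim]
      ring)
    (fun o _ => by
      rcases o with _ | i
      · exact v_mem_hull v
      · exact swap_mem_hull v i)
  have hrw : ∑ o : Option (Fin n), W o • Z o =
      v + ∑ i, t i • ((v i.succ - v i.castSucc) • eDiff i) := by
    rw [Fintype.sum_option]
    simp only [hW, hZ, Option.elim, smul_add]
    rw [Finset.sum_add_distrib, ← Finset.sum_smul]
    rw [sub_smul, one_smul]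
    abel
  rwa [hrw] at hmem

end WithV

lemma linearIndependent_eDiff :
    LinearIndependent ℝ (eDiff : Fin n → (Fin (n+1) → ℝ)) := by
  rw [Fintype.linearIndependent_iff]
  intro g hg j
  have := congrArg (preL n ((j:ℕ)+1)) hg
  rw [map_sum, map_zero] at this
  simp only [_root_.map_smul, preL_eDiff_idx, smul_eq_mul, mul_ite, mul_one, mul_zero] at this
  rwa [Finset.sum_ite_eq' Finset.univ j g, if_pos (Finset.mem_univ j)] at this

lemma eDiff_injective : Function.Injective (eDiff : Fin n → (Fin (n+1) → ℝ)) := by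
  intro i i' h
  have := congrArg (preL n ((i:ℕ)+1)) h
  rw [preL_eDiff_idx, preL_eDiff_idx, if_pos rfl] at this
  by_contra hne
  rw [if_neg (Ne.symm hne)] at this
  norm_num at this

lemma finrank_span_eDiff (S : Finset (Fin n)) :
    Module.finrank ℝ (Submodule.span ℝ (eDiff '' (S : Set (Fin n)))) = S.card := by
  classical
  have hsub : ((S.image eDiff : Finset (Fin (n+1) → ℝ)) : Set (Fin (n+1) → ℝ)) ⊆
      Set.range (eDiff : Fin n → (Fin (n+1) → ℝ)) := by
    intro x hx
    simp only [Finset.coe_image] at hx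
    exact Set.image_subset_range _ _ hx
  have hli := ((linearIndepOn_id_range_iff eDiff_injective).mpr linearIndependent_eDiff).mono hsub
  have himg : eDiff '' (S : Set (Fin n)) =
      ((S.image eDiff : Finset (Fin (n+1) → ℝ)) : Set (Fin (n+1) → ℝ)) :=
    (Finset.coe_image).symm
  rw [himg, finrank_span_finset_eq_card hli,
    Finset.card_image_of_injective _ eDiff_injective]


def cS (S : Finset (Fin n)) : Fin (n+1) → ℝ :=
  fun k => (((Sᶜ).filter (fun j : Fin n => (j : ℕ) < (k : ℕ))).card : ℝ)

lemma cS_step (S : Finset (Fin n)) (j : Fin n) :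
    cS S j.succ = cS S j.castSucc + (if j ∈ S then 0 else 1) := by
  simp only [cS, Fin.val_succ, Fin.coe_castSucc]
  rcases Finset.decidableMem j S with hj | hj
  · -- j ∉ S, i.e. j ∈ Sᶜ : the filter gains the element j
    rw [if_neg hj]
    have : (Sᶜ).filter (fun i : Fin n => (i : ℕ) < (j : ℕ)+1) =
        insert j ((Sᶜ).filter (fun i : Fin n => (i : ℕ) < (j : ℕ))) := by
      ext i
      simp only [Finset.mem_filter, Finset.mem_insert, Finset.mem_compl]
      constructor
      · rintro ⟨hiS, hlt⟩
        rcases Nat.lt_succ_iff_lt_or_eq.mp hlt with h | h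
        · exact Or.inr ⟨hiS, h⟩
        · exact Or.inl (Fin.ext h)
      · rintro (rfl | ⟨hiS, hlt⟩)
        · exact ⟨hj, Nat.lt_succ_self _⟩
        · exact ⟨hiS, Nat.lt_succ_of_lt hlt⟩
    rw [this, Finset.card_insert_of_notMem (by simp)]
    push_cast
    ring
  · rw [if_pos hj]
    have : (Sᶜ).filter (fun i : Fin n => (i : ℕ) < (j : ℕ)+1) =
        (Sᶜ).filter (fun i : Fin n => (i : ℕ) < (j : ℕ)) := by
      ext i
      simp only [Finset.mem_filter, Finset.mem_compl]
      constructor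
      · rintro ⟨hiS, hlt⟩
        refine ⟨hiS, ?_⟩
        rcases Nat.lt_succ_iff_lt_or_eq.mp hlt with h | h
        · exact h
        · exact absurd hj (Fin.ext h ▸ hiS)
      · rintro ⟨hiS, hlt⟩
        exact ⟨hiS, Nat.lt_succ_of_lt hlt⟩
    rw [this, add_zero]

lemma cS_mono (S : Finset (Fin n)) (j : Fin n) :
    cS S j.castSucc ≤ cS S j.succ := by
  rw [cS_step]
  split <;> norm_num

lemma cS_mem_iff (S : Finset (Fin n)) (j : Fin n) :
    j ∈ S ↔ cS S j.castSucc = cS S j.succ := by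
  rw [cS_step]
  split <;> rename_i h
  · simp [h]
  · simp only [iff_false, h, false_iff]
    intro habs
    nlinarith [habs]

end PermAux

/-- For strictly increasing `v`: (a) `v` is a vertex of `Perm(v)`; (b) the feasible cone
of `Perm(v)` at `v` is the cone generated by `e_1-e_2, …, e_n-e_{n+1}`; (c) each `F_S` is
a face of `Perm(v)` of dimension `|S|`; (d) `S ↦ F_S` is a bijection from subsets of `[n]`
onto the faces of `Perm(v)` containing `v`. -/
theorem faces_at_vertex_of_permutohedron {n : ℕ} (v : Fin (n+1) → ℝ) (hv : StrictMono v) :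
    IsFaceOf {v} (permutohedron v) ∧
    fcone {v} (permutohedron v) =
      {u | ∃ c : Fin n → ℝ, (∀ i, 0 ≤ c i) ∧ u = ∑ i, c i • eDiff i} ∧
    (∀ S : Finset (Fin n),
      IsFaceOf (faceS v S) (permutohedron v) ∧ polyDim (faceS v S) = S.card) ∧
    Set.BijOn (faceS v) Set.univ {F | IsFaceOf F (permutohedron v) ∧ v ∈ F} := by
  classical
  open PermAux in
  have hperm : permutohedron v =
      convexHull ℝ {x | ∃ σ : Equiv.Perm (Fin (n+1)), x = v ∘ ⇑σ} := rfl
  -- v belongs to every faceS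
  have hvP : v ∈ permutohedron v := v_mem_hull v
  have hv_faceS : ∀ S : Finset (Fin n), v ∈ faceS v S := by
    intro S
    exact ⟨hvP, by simp only [Set.mem_setOf_eq, sub_self]; exact Submodule.zero_mem _⟩
  -- part (c)
  have partc : ∀ S : Finset (Fin n),
      IsFaceOf (faceS v S) (permutohedron v) ∧ polyDim (faceS v S) = S.card := by
    intro S
    constructor
    · refine ⟨⟨v, hv_faceS S⟩, cS S, ?_⟩
      have := face_form (v := v) hv.monotone (cS S) (cS_mono S) S (cS_mem_iff S)
      rw [hperm, this]
      rfl
    · -- dimension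
      have hspan : vectorSpan ℝ (faceS v S) =
          Submodule.span ℝ (eDiff '' (S : Set (Fin n))) := by
        apply le_antisymm
        · rw [vectorSpan_def]
          apply Submodule.span_le.mpr
          intro z hz
          rw [Set.mem_vsub] at hz
          obtain ⟨a, ha, b, hb, rfl⟩ := hz
          have : a -ᵥ b = (a - v) - (b - v) := by
            simp [vsub_eq_sub]
          rw [this]
          exact sub_mem ha.2 hb.2
        · apply Submodule.span_le.mpr
          rintro z ⟨i, hi, rfl⟩
          have hg : (0:ℝ) < v i.succ - v i.castSucc := by
            have := hv (Fin.castSucc_lt_succ (i := i))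
            linarith
          have hw : v + (v i.succ - v i.castSucc) • eDiff i ∈ faceS v S := by
            refine ⟨by rw [hperm]; exact swap_mem_hull v i, ?_⟩
            simp only [Set.mem_setOf_eq, add_sub_cancel_left]
            exact Submodule.smul_mem _ _ (Submodule.subset_span ⟨i, hi, rfl⟩)
          have hvs : (v + (v i.succ - v i.castSucc) • eDiff i) -ᵥ v ∈
              vectorSpan ℝ (faceS v S) :=
            vsub_mem_vectorSpan ℝ hw (hv_faceS S)
          have hvsub : (v + (v i.succ - v i.castSucc) • eDiff i) -ᵥ v =
              (v i.succ - v i.castSucc) • eDiff i := by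
            simp [vsub_eq_sub]
          rw [hvsub] at hvs
          have := Submodule.smul_mem (vectorSpan ℝ (faceS v S))
            (v i.succ - v i.castSucc)⁻¹ hvs
          rwa [smul_smul, inv_mul_cancel₀ (ne_of_gt hg), one_smul] at this
      rw [polyDim, hspan, finrank_span_eDiff]
  -- part (a)
  have hface0 : faceS v (∅ : Finset (Fin n)) = {v} := by
    ext x
    simp only [faceS, Finset.coe_empty, Set.image_empty, Submodule.span_empty,
      Set.mem_inter_iff, Set.mem_setOf_eq, Submodule.mem_bot, sub_eq_zero,
      Set.mem_singleton_iff]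
    constructor
    · rintro ⟨-, rfl⟩; rfl
    · rintro rfl; exact ⟨hvP, rfl⟩
  have parta : IsFaceOf {v} (permutohedron v) := by
    rw [← hface0]
    exact (partc ∅).1
  -- part (b)
  have partb : fcone {v} (permutohedron v) =
      {u | ∃ c : Fin n → ℝ, (∀ i, 0 ≤ c i) ∧ u = ∑ i, c i • eDiff i} := by
    ext u
    constructor
    · intro hu
      obtain ⟨ε, hε, hδ⟩ := hu v rfl
      have hδ2 : v + (ε/2) • u ∈ permutohedron v := hδ (ε/2) (by linarith) (by linarith)
      rw [hperm] at hδ2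
      have hε2 : (0:ℝ) < ε/2 := by linarith
      have htotu : preL n (n+1) u = 0 := by
        have h1 := hull_total (v := v) hδ2
        rw [map_add, _root_.map_smul] at h1
        simp only [smul_eq_mul] at h1
        have : ε/2 * preL n (n+1) u = 0 := by linarith
        exact by
          rcases mul_eq_zero.mp this with h | h
          · linarith
          · exact h
      have hprenn : ∀ j : Fin n, 0 ≤ preL n ((j:ℕ)+1) u := by
        intro j
        have h1 := hull_pre_le (v := v) hv.monotone hδ2 (m := (j:ℕ)+1) (by omega)
        rw [map_add, _root_.map_smul] at h1
        simp only [smul_eq_mul] at h1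
        nlinarith
      refine ⟨fun j => preL n ((j:ℕ)+1) u, hprenn, ?_⟩
      apply eq_of_preL_eq
      · intro j
        rw [map_sum]
        simp only [_root_.map_smul, preL_eDiff_idx, smul_eq_mul, mul_ite, mul_one, mul_zero]
        rw [Finset.sum_ite_eq' Finset.univ j (fun i => preL n ((i:ℕ)+1) u),
          if_pos (Finset.mem_univ j)]
      · rw [map_sum]
        simp only [_root_.map_smul, preL_eDiff_total, smul_eq_mul, mul_zero,
          Finset.sum_const_zero]
        exact htotu
    · rintro ⟨c, hc, rfl⟩
      intro x hx
      rw [Set.mem_singleton_iff] at hx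
      rw [hx]
      have hg : ∀ i : Fin n, (0:ℝ) < v i.succ - v i.castSucc := by
        intro i
        have := hv (Fin.castSucc_lt_succ (i := i))
        linarith
      set A : ℝ := ∑ i, c i / (v i.succ - v i.castSucc) with hA
      have hA0 : 0 ≤ A :=
        Finset.sum_nonneg fun i _ => div_nonneg (hc i) (le_of_lt (hg i))
      refine ⟨1/(A+1), by positivity, ?_⟩
      intro δ hδ0 hδε
      set t : Fin n → ℝ := fun i => δ * (c i / (v i.succ - v i.castSucc)) with ht
      have ht0 : ∀ i, 0 ≤ t i := fun i =>
        mul_nonneg (le_of_lt hδ0) (div_nonneg (hc i) (le_of_lt (hg i)))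
      have htsum : ∑ i, t i ≤ 1 := by
        have : ∑ i, t i = δ * A := by
          rw [hA, Finset.mul_sum]
        rw [this]
        have h1 : δ * A ≤ (1/(A+1)) * A := by
          apply mul_le_mul_of_nonneg_right (le_of_lt hδε) hA0
        have h2 : (1/(A+1)) * A ≤ 1 := by
          rw [div_mul_eq_mul_div, one_mul, div_le_one (by positivity)]
          linarith
        linarith
      have hmem := add_sum_mem_hull (v := v) t ht0 htsum
      have heq : v + ∑ i, t i • ((v i.succ - v i.castSucc) • eDiff i) =
          v + δ • ∑ i, c i • eDiff i := by
        congr 1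
        rw [Finset.smul_sum]
        apply Finset.sum_congr rfl
        intro i _
        rw [smul_smul, smul_smul, ht]
        congr 1
        rw [mul_assoc, div_mul_cancel₀ _ (ne_of_gt (hg i))]
      rw [heq] at hmem
      rw [hperm]
      exact hmem
  -- part (d)
  have faceS_subset : ∀ S T : Finset (Fin n), faceS v S ⊆ faceS v T → S ⊆ T := by
    intro S T hsub i hi
    have hg : (0:ℝ) < v i.succ - v i.castSucc := by
      have := hv (Fin.castSucc_lt_succ (i := i))
      linarith
    have hw : v + (v i.succ - v i.castSucc) • eDiff i ∈ faceS v S := by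
      refine ⟨by rw [hperm]; exact swap_mem_hull v i, ?_⟩
      simp only [Set.mem_setOf_eq, add_sub_cancel_left]
      exact Submodule.smul_mem _ _ (Submodule.subset_span ⟨i, hi, rfl⟩)
    have hwT := (hsub hw).2
    simp only [Set.mem_setOf_eq, add_sub_cancel_left] at hwT
    rw [mem_span_eDiff_iff] at hwT
    by_contra hiT
    have := hwT.2 i hiT
    rw [_root_.map_smul, preL_eDiff_idx, if_pos rfl] at this
    simp only [smul_eq_mul, mul_one] at this
    exact (ne_of_gt hg) this
  have partd : Set.BijOn (faceS v) Set.univ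
      {F | IsFaceOf F (permutohedron v) ∧ v ∈ F} := by
    refine ⟨?_, ?_, ?_⟩
    · intro S _
      exact ⟨(partc S).1, hv_faceS S⟩
    · intro S _ T _ h
      exact le_antisymm (faceS_subset S T (le_of_eq h)) (faceS_subset T S (le_of_eq h.symm))
    · rintro F ⟨⟨hne, c, hFeq⟩, hvF⟩
      have hmax : ∀ y ∈ convexHull ℝ {x | ∃ σ : Equiv.Perm (Fin (n+1)), x = v ∘ ⇑σ},
          ∑ k, c k * y k ≤ ∑ k, c k * v k := by
        rw [hFeq] at hvF
        intro y hy
        exact hvF.2 y (by rw [hperm]; exact hy)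
      have hc := fun j => adjacent_mono_of_max (v := v) hv hmax j
      set S : Finset (Fin n) :=
        Finset.univ.filter (fun j => c j.castSucc = c j.succ) with hSdef
      have hS : ∀ j : Fin n, j ∈ S ↔ c j.castSucc = c j.succ := by
        intro j
        simp [hSdef]
      refine ⟨S, Set.mem_univ S, ?_⟩
      have := face_form (v := v) hv.monotone c hc S hS
      rw [hFeq]
      rw [hperm]
      rw [this]
      rfl
  exact ⟨parta, partb, partc, partd⟩
end

section
/- Let α assign a real number α(F,P) to every pair consisting of an integral polytope P ⊆ ℝ^D and a nonempty face F of P. Assume α satisfies McMullen's formula and that α(tF, tP) = α(F,P) for every positive integer t and every nonempty face F of every integral polytope P. Then for every nonempty integral polytope P ⊆ ℝ^D and every integer t ≥ 1, Lat(tP) = Σ_{k=0}^{dim P} c_k t^k, where c_k = Σ_{F a k-dimensional face of P} α(F,P)·nvol(F); that is, t ↦ Lat(tP) agrees for t ≥ 1 with a polynomial whose coefficient of t^k is given by this face sum. -/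
open scoped Pointwise
open Filter MeasureTheory

/-- Normalized volume of an integral polytope `F`: volume with respect to the
translation-invariant measure on its affine span for which a fundamental domain of the
lattice (direction of affine span) ∩ ℤ^D has measure 1.  For an integral polytope this
equals the limit of `Lat(tF)/t^(dim F)`. -/
noncomputable def nvol {D : ℕ} (F : Set (Fin D → ℝ)) : ℝ :=
  limUnder atTop (fun t : ℕ => (latticePts ((t : ℝ) • F) : ℝ) / (t : ℝ) ^ polyDim F)


section Aux
open scoped ENNReal

-- finiteness of lattice points in a bounded set
lemma latpts_finite {d : ℕ} {C : Set (Fin d → ℝ)} (hC : Bornology.IsBounded C) :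
    {z : Fin d → ℤ | (fun i => (z i : ℝ)) ∈ C}.Finite := by
  obtain ⟨R, hR⟩ := hC.subset_closedBall 0
  have : {z : Fin d → ℤ | (fun i => (z i : ℝ)) ∈ C} ⊆
      Set.pi Set.univ (fun _ : Fin d => Set.Icc (-⌈R⌉) ⌈R⌉) := by
    intro z hz
    have h2 := hR hz
    simp only [Metric.mem_closedBall, dist_zero_right] at h2
    intro i _
    have := (norm_le_pi_norm (fun i => (z i : ℝ)) i).trans h2
    simp only [Real.norm_eq_abs, abs_le] at this
    constructor
    · have : (-⌈R⌉ : ℝ) ≤ (z i : ℝ) := by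
        push_cast
        linarith [this.1, Int.le_ceil R]
      exact_mod_cast this
    · have : (z i : ℝ) ≤ (⌈R⌉ : ℝ) := by
        push_cast
        linarith [this.2, Int.le_ceil R]
      exact_mod_cast this
  exact Set.Finite.subset (Set.Finite.pi (fun _ => Set.finite_Icc _ _)) this

section LemmaA
variable {d : ℕ} {K : Set (Fin d → ℝ)}

def box (s : ℕ) (z : Fin d → ℤ) : Set (Fin d → ℝ) :=
  Set.pi Set.univ fun i => Set.Ico ((z i : ℝ) / s) (((z i : ℝ) + 1) / s)

lemma mem_box_iff {s : ℕ} (hs : 1 ≤ s) {z : Fin d → ℤ} {x : Fin d → ℝ} :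
    x ∈ box s z ↔ ∀ i, ⌊(s : ℝ) * x i⌋ = z i := by
  have hs' : (0:ℝ) < s := by exact_mod_cast hs
  simp only [box, Set.mem_pi, Set.mem_univ, forall_true_left, Set.mem_Ico]
  refine forall_congr' fun i => ?_
  rw [div_le_iff₀ hs', lt_div_iff₀ hs', Int.floor_eq_iff]
  push_cast
  constructor
  · rintro ⟨h1, h2⟩
    exact ⟨by linarith [mul_comm (s:ℝ) (x i)], by linarith [mul_comm (s:ℝ) (x i)]⟩
  · rintro ⟨h1, h2⟩
    exact ⟨by linarith [mul_comm (s:ℝ) (x i)], by linarith [mul_comm (s:ℝ) (x i)]⟩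

lemma volume_box {s : ℕ} (hs : 1 ≤ s) (z : Fin d → ℤ) :
    volume (box s z) = ENNReal.ofReal ((s : ℝ)⁻¹) ^ d := by
  have hs' : (0:ℝ) < s := by exact_mod_cast hs
  rw [box, volume_pi_pi]
  have h : ∀ i : Fin d, volume (Set.Ico ((z i : ℝ) / s) (((z i : ℝ) + 1) / s))
      = ENNReal.ofReal ((s : ℝ)⁻¹) := by
    intro i
    rw [Real.volume_Ico]
    congr 1
    field_simp
    ring
  simp [h]

lemma dist_floorvec {s : ℕ} (hs : 1 ≤ s) (x : Fin d → ℝ) :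
    dist x ((s:ℝ)⁻¹ • fun i => ((⌊(s:ℝ) * x i⌋ : ℤ) : ℝ)) ≤ (s:ℝ)⁻¹ := by
  have hs' : (0:ℝ) < s := by exact_mod_cast hs
  have hinv : (0:ℝ) < (s:ℝ)⁻¹ := by positivity
  rw [dist_pi_le_iff hinv.le]
  intro i
  simp only [Pi.smul_apply, smul_eq_mul]
  rw [Real.dist_eq, abs_le]
  have h1 : (⌊(s:ℝ) * x i⌋ : ℝ) ≤ (s:ℝ) * x i := Int.floor_le _
  have h2 : (s:ℝ) * x i < (⌊(s:ℝ) * x i⌋ : ℝ) + 1 := Int.lt_floor_add_one _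
  have key : x i - (s:ℝ)⁻¹ * (⌊(s:ℝ) * x i⌋ : ℝ)
      = (s:ℝ)⁻¹ * ((s:ℝ) * x i - (⌊(s:ℝ) * x i⌋ : ℝ)) := by
    rw [mul_sub, inv_mul_cancel_left₀ (ne_of_gt hs')]
  constructor
  · rw [key]; nlinarith
  · rw [key]
    have : (s:ℝ) * x i - (⌊(s:ℝ) * x i⌋ : ℝ) ≤ 1 := by linarith
    calc (s:ℝ)⁻¹ * ((s:ℝ) * x i - (⌊(s:ℝ) * x i⌋ : ℝ)) ≤ (s:ℝ)⁻¹ * 1 := by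
          apply mul_le_mul_of_nonneg_left this hinv.le
    _ = (s:ℝ)⁻¹ := mul_one _

set_option maxHeartbeats 1000000 in
lemma lemmaA (hconv : Convex ℝ K) (hcomp : IsCompact K) :
    Tendsto (fun s : ℕ => (latticePts ((s:ℝ) • K) : ℝ) / (s:ℝ) ^ d) atTop
      (nhds (volume K).toReal) := by
  classical
  set A : ℕ → Set (Fin d → ℝ) :=
    fun s => {x | (fun i => ((⌊(s:ℝ) * x i⌋ : ℤ) : ℝ)) ∈ (s:ℝ) • K} with hA
  have hmeasmap : ∀ s : ℕ, Measurable
      (fun x : Fin d → ℝ => (fun i => ((⌊(s:ℝ) * x i⌋ : ℤ) : ℝ))) := by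
    intro s
    apply measurable_pi_lambda
    intro i
    exact measurable_from_top.comp ((measurable_const.mul (measurable_pi_apply i)).floor)
  have hsKclosed : ∀ s : ℕ, IsClosed ((s:ℝ) • K) := fun s => (hcomp.smul (s:ℝ)).isClosed
  have hAmble : ∀ s : ℕ, MeasurableSet (A s) := fun s =>
    (hmeasmap s) (hsKclosed s).measurableSet
  have hBc : IsCompact (Metric.cthickening 1 K) := hcomp.cthickening
  have happrox : ∀ s : ℕ, 1 ≤ s → ∀ x, x ∈ A s →
      ∃ k ∈ K, dist x k ≤ (s:ℝ)⁻¹ := by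
    intro s hs x hx
    have hs' : (0:ℝ) < s := by exact_mod_cast hs
    rw [hA, Set.mem_setOf_eq, Set.mem_smul_set_iff_inv_smul_mem₀ (ne_of_gt hs')] at hx
    exact ⟨_, hx, dist_floorvec hs x⟩
  have hsub : ∀ᶠ s : ℕ in atTop, A s ⊆ Metric.cthickening 1 K := by
    filter_upwards [eventually_ge_atTop 1] with s hs
    intro x hx
    obtain ⟨k, hk, hdk⟩ := happrox s hs x hx
    refine Metric.mem_cthickening_of_dist_le x k 1 K hk ?_
    calc dist x k ≤ (s:ℝ)⁻¹ := hdk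
    _ ≤ 1 := by rw [inv_le_one_iff₀]; right; exact_mod_cast hs
  have hinvto : Tendsto (fun s : ℕ => (s:ℝ)⁻¹) atTop (nhds 0) :=
    tendsto_inv_atTop_zero.comp tendsto_natCast_atTop_atTop
  have hptwise : ∀ x ∉ frontier K, ∀ᶠ s : ℕ in atTop, (x ∈ A s ↔ x ∈ K) := by
    intro x hx
    rw [frontier, Set.mem_diff, not_and_or, not_not] at hx
    rcases hx with hx | hx
    · have hxo : ∃ ε > 0, ∀ k ∈ K, ε ≤ dist x k := by
        by_contra h
        push_neg at h
        exact hx (Metric.mem_closure_iff.2 fun ε hε => h ε hε)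
      obtain ⟨ε, hε, hxε⟩ := hxo
      filter_upwards [hinvto.eventually (eventually_lt_nhds hε), eventually_ge_atTop 1]
        with s hsε hs1
      constructor
      · intro hxA
        obtain ⟨k, hk, hdk⟩ := happrox s hs1 x hxA
        exact absurd (hxε k hk) (by linarith)
      · intro hxK
        exact absurd (subset_closure hxK) hx
    · obtain ⟨ε, hε, hball⟩ := Metric.isOpen_iff.1 isOpen_interior x hx
      filter_upwards [hinvto.eventually (eventually_lt_nhds hε), eventually_ge_atTop 1]
        with s hsε hs1
      have hs' : (0:ℝ) < s := by exact_mod_cast hs1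
      refine ⟨fun _ => interior_subset hx, fun _ => ?_⟩
      rw [hA, Set.mem_setOf_eq, Set.mem_smul_set_iff_inv_smul_mem₀ (ne_of_gt hs')]
      apply interior_subset
      apply hball
      rw [Metric.mem_ball, dist_comm]
      exact lt_of_le_of_lt (dist_floorvec hs1 x) hsε
  have hfront : volume (frontier K) = 0 := hconv.addHaar_frontier volume
  have hae : ∀ᵐ x ∂(volume : Measure (Fin d → ℝ)), ∀ᶠ s : ℕ in atTop, (x ∈ A s ↔ x ∈ K) := by
    rw [MeasureTheory.ae_iff]
    apply measure_mono_null _ hfront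
    intro x hx
    simp only [Set.mem_setOf_eq] at hx
    by_contra hfx
    exact hx (hptwise x hfx)
  have hmain : Tendsto (fun s => volume (A s)) atTop (nhds (volume K)) :=
    tendsto_measure_of_ae_tendsto_indicator atTop hcomp.isClosed.measurableSet hAmble
      hBc.isClosed.measurableSet (IsCompact.measure_lt_top hBc).ne hsub hae
  have hvol : ∀ s : ℕ, 1 ≤ s → volume (A s)
      = (latticePts ((s:ℝ) • K) : ℝ≥0∞) * ENNReal.ofReal ((s:ℝ)⁻¹) ^ d := by
    intro s hs
    have hfin : {z : Fin d → ℤ | (fun i => (z i : ℝ)) ∈ (s:ℝ) • K}.Finite :=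
      latpts_finite ((hcomp.smul (s:ℝ)).isBounded)
    have hAeq : A s = ⋃ z ∈ hfin.toFinset, box s z := by
      ext x
      simp only [Set.mem_iUnion, hA, Set.mem_setOf_eq, Set.Finite.mem_toFinset]
      constructor
      · intro hx
        exact ⟨fun i => ⌊(s:ℝ) * x i⌋, hx, (mem_box_iff hs).2 fun i => rfl⟩
      · rintro ⟨z, hz, hxz⟩
        have h1 := (mem_box_iff hs).1 hxz
        have h2 : (fun i => ⌊(s:ℝ) * x i⌋) = z := funext h1
        show (fun i => ((⌊(s:ℝ) * x i⌋ : ℤ) : ℝ)) ∈ (s:ℝ) • K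
        rw [show (fun i => ((⌊(s:ℝ) * x i⌋ : ℤ) : ℝ)) = fun i => ((z i : ℤ) : ℝ) by
          funext i; rw [h1 i]]
        exact hz
    rw [hAeq, measure_biUnion_finset, Finset.sum_congr rfl (fun z _ => volume_box hs z)]
    · rw [Finset.sum_const, latticePts, Set.ncard_eq_toFinset_card _ hfin, nsmul_eq_mul]
    · intro z hz z' hz' hne
      simp only [Function.onFun]
      rw [Set.disjoint_left]
      intro x hxz hxz'
      apply hne
      have h1 := (mem_box_iff hs).1 hxz
      have h2 := (mem_box_iff hs).1 hxz'
      exact funext fun i => (h1 i).symm.trans (h2 i)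
    · exact fun z _ => (MeasurableSet.pi Set.countable_univ fun i _ => measurableSet_Ico)
  have hfinK : volume K ≠ ⊤ := (IsCompact.measure_lt_top hcomp).ne
  have hcomb := (ENNReal.tendsto_toReal hfinK).comp hmain
  apply hcomb.congr'
  filter_upwards [eventually_ge_atTop 1] with s hs
  have hs' : (0:ℝ) < s := by exact_mod_cast hs
  simp only [Function.comp_apply]
  rw [hvol s hs, ENNReal.toReal_mul, ENNReal.toReal_pow, ENNReal.toReal_ofReal (by positivity),
    ENNReal.toReal_natCast]
  rw [div_eq_mul_inv, ← inv_pow]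

end LemmaA


variable {D : ℕ} {F P : Set (Fin D → ℝ)}

/-- the linear functional -/
noncomputable def lfun (c : Fin D → ℝ) : (Fin D → ℝ) →ₗ[ℝ] ℝ :=
  ∑ i, c i • LinearMap.proj i

lemma lfun_apply (c x : Fin D → ℝ) : lfun c x = ∑ i, c i * x i := by
  simp [lfun, LinearMap.sum_apply]

lemma IsFaceOf.subset (h : IsFaceOf F P) : F ⊆ P := by
  obtain ⟨-, c, rfl⟩ := h
  exact fun x hx => hx.1

lemma IsFaceOf.lfun_eq (h : IsFaceOf F P) :
    ∃ c : Fin D → ℝ, ∃ M : ℝ, (∀ y ∈ P, lfun c y ≤ M) ∧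
      (∀ x, x ∈ F ↔ x ∈ P ∧ lfun c x = M) := by
  obtain ⟨⟨x₀, hx₀⟩, c, hFc⟩ := h
  subst hFc
  obtain ⟨hx₀P, hx₀max⟩ := hx₀
  refine ⟨c, lfun c x₀, fun y hy => by rw [lfun_apply, lfun_apply]; exact hx₀max y hy, ?_⟩
  intro x
  constructor
  · rintro ⟨hxP, hxmax⟩
    refine ⟨hxP, le_antisymm ?_ ?_⟩
    · rw [lfun_apply, lfun_apply]; exact hx₀max x hxP
    · rw [lfun_apply, lfun_apply]; exact hxmax x₀ hx₀P
  · rintro ⟨hxP, hxM⟩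
    refine ⟨hxP, fun y hy => ?_⟩
    have h1 : lfun c y ≤ lfun c x₀ := by rw [lfun_apply, lfun_apply]; exact hx₀max y hy
    have h2 := hxM
    rw [lfun_apply, lfun_apply] at h2
    linarith [hx₀max y hy]

/-- A face of a polytope `conv V` is the hull of a subset of `V` contained in it. -/
lemma IsFaceOf.exists_finset {V : Finset (Fin D → ℝ)}
    (hV : P = convexHull ℝ (V : Set (Fin D → ℝ))) (h : IsFaceOf F P) :
    ∃ V' : Finset (Fin D → ℝ), V' ⊆ V ∧ V'.Nonempty ∧
      F = convexHull ℝ (V' : Set (Fin D → ℝ)) ∧ (V' : Set (Fin D → ℝ)) ⊆ F := by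
  classical
  obtain ⟨c, M, hPle, hmem⟩ := h.lfun_eq
  set L := lfun c with hL
  have hFeq : F = convexHull ℝ ((V.filter (fun v => L v = M) : Finset (Fin D → ℝ)) :
      Set (Fin D → ℝ)) := by
    apply Set.Subset.antisymm
    · -- F ⊆ conv V'
      intro x hx
      obtain ⟨hxP, hxM⟩ := (hmem x).1 hx
      rw [hV, Finset.convexHull_eq] at hxP
      obtain ⟨w, hw0, hw1, hwx⟩ := hxP
      have hwle : ∀ v ∈ V, L v ≤ M := fun v hv =>
        hPle v (hV ▸ subset_convexHull ℝ (V : Set (Fin D → ℝ)) hv)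
      have hLx : L x = ∑ v ∈ V, w v * L v := by
        rw [← hwx, Finset.centerMass_eq_of_sum_1 _ _ hw1, map_sum]
        simp [smul_eq_mul]
      have hzero : ∑ v ∈ V, w v * (M - L v) = 0 := by
        rw [Finset.sum_congr rfl (fun v _ => mul_sub (w v) M (L v)), Finset.sum_sub_distrib,
          ← Finset.sum_mul, hw1, one_mul, ← hLx, hxM, sub_self]
      have hterm : ∀ v ∈ V, w v * (M - L v) = 0 :=
        (Finset.sum_eq_zero_iff_of_nonneg (fun v hv =>
          mul_nonneg (hw0 v hv) (sub_nonneg.2 (hwle v hv)))).1 hzero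
      have hsupp : V.filter (fun v => w v ≠ 0) ⊆ V.filter (fun v => L v = M) := by
        intro v hv
        rw [Finset.mem_filter] at hv ⊢
        refine ⟨hv.1, ?_⟩
        have := hterm v hv.1
        rcases mul_eq_zero.1 this with h | h
        · exact absurd h hv.2
        · linarith [sub_eq_zero.1 h]
      have hx' : (V.filter (fun v => w v ≠ 0)).centerMass w id = x := by
        rw [Finset.centerMass_filter_ne_zero, hwx]
      rw [← hx']
      have hsum : ∑ v ∈ V.filter (fun v => w v ≠ 0), w v = 1 := by
        rw [Finset.sum_filter_ne_zero, hw1]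
      apply convexHull_mono (Finset.coe_subset.2 hsupp)
      exact Finset.centerMass_mem_convexHull _ (fun v hv => hw0 v (Finset.filter_subset _ _ hv))
        (by rw [hsum]; norm_num) (fun v hv => Finset.mem_coe.2 hv)
    · -- conv V' ⊆ F
      intro x hx
      rw [Finset.convexHull_eq] at hx
      obtain ⟨w, hw0, hw1, hwx⟩ := hx
      have hx2 : x ∈ convexHull ℝ ((V.filter (fun v => L v = M) : Finset (Fin D → ℝ)) :
          Set (Fin D → ℝ)) := by
        rw [Finset.convexHull_eq]
        exact ⟨w, hw0, hw1, hwx⟩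
      have hxP : x ∈ P := by
        rw [hV]
        exact convexHull_mono (Finset.coe_subset.2 (Finset.filter_subset _ _)) hx2
      refine (hmem x).2 ⟨hxP, ?_⟩
      rw [← hwx, Finset.centerMass_eq_of_sum_1 _ _ hw1, map_sum]
      have : ∀ v ∈ V.filter (fun v => L v = M), L (w v • id v) = w v * M := by
        intro v hv
        rw [_root_.map_smul, smul_eq_mul, id, (Finset.mem_filter.1 hv).2]
      rw [Finset.sum_congr rfl this, ← Finset.sum_mul, hw1, one_mul]
  refine ⟨V.filter (fun v => L v = M), Finset.filter_subset _ _, ?_, hFeq, ?_⟩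
  · rw [← Finset.coe_nonempty, ← convexHull_nonempty_iff (𝕜 := ℝ), ← hFeq]
    exact ‹IsFaceOf F P›.1
  · intro v hv
    rw [Finset.mem_coe, Finset.mem_filter] at hv
    exact (hmem v).2 ⟨hV ▸ subset_convexHull ℝ (V : Set (Fin D → ℝ)) hv.1, hv.2⟩

/-- Faces of integral polytopes are integral polytopes. -/
lemma IsFaceOf.isIntegralPolytope (hP : IsIntegralPolytope P) (h : IsFaceOf F P) :
    IsIntegralPolytope F := by
  obtain ⟨V, -, hint, hV⟩ := hP
  obtain ⟨V', hV'V, hV'ne, hFeq, -⟩ := h.exists_finset hV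
  exact ⟨V', hV'ne, fun x hx => hint x (hV'V hx), hFeq⟩

/-- The set of faces of a polytope is finite. -/
lemma facesFinite (hP : IsIntegralPolytope P) : {F | IsFaceOf F P}.Finite := by
  classical
  obtain ⟨V, -, -, hV⟩ := hP
  have key : ∀ F ∈ {F | IsFaceOf F P},
      F = convexHull ℝ ((V.filter (· ∈ F) : Finset (Fin D → ℝ)) : Set (Fin D → ℝ)) := by
    intro F hF
    obtain ⟨V', hV'V, -, hFeq, hV'F⟩ := hF.exists_finset hV
    have hconv : Convex ℝ F := hFeq ▸ convex_convexHull ℝ _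
    apply Set.Subset.antisymm
    · refine hFeq.le.trans (convexHull_mono ?_)
      intro v hv
      rw [Finset.mem_coe, Finset.mem_filter]
      exact ⟨hV'V hv, hV'F hv⟩
    · exact convexHull_min (fun v hv => (Finset.mem_filter.1 hv).2) hconv
  apply Set.Finite.of_finite_image (f := fun F => V.filter (· ∈ F))
  · apply Set.Finite.subset (Set.finite_range (fun W : V.powerset => (W : Finset (Fin D → ℝ))))
    rintro W ⟨F, hF, rfl⟩
    exact ⟨⟨_, Finset.mem_powerset.2 (Finset.filter_subset _ _)⟩, rfl⟩
  · intro F hF G hG hFG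
    have heq : (V.filter (· ∈ F)) = (V.filter (· ∈ G)) := hFG
    rw [key F hF, key G hG, heq]

lemma sum_mul_smul (c x : Fin D → ℝ) (r : ℝ) :
    ∑ i, c i * (r • x) i = r * ∑ i, c i * x i := by
  rw [Finset.mul_sum]
  exact Finset.sum_congr rfl fun i _ => by simp [smul_eq_mul]; ring

/-- Scaling a face by a positive real. -/
lemma IsFaceOf.smul (h : IsFaceOf F P) {r : ℝ} (hr : 0 < r) :
    IsFaceOf (r • F) (r • P) := by
  obtain ⟨hne, c, hFc⟩ := h
  refine ⟨hne.smul_set, c, ?_⟩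
  ext x'
  constructor
  · rintro ⟨x, hx, rfl⟩
    rw [hFc] at hx
    obtain ⟨hxP, hxmax⟩ := hx
    refine ⟨⟨x, hxP, rfl⟩, ?_⟩
    rintro y' ⟨y, hyP, rfl⟩
    rw [sum_mul_smul, sum_mul_smul]
    exact mul_le_mul_of_nonneg_left (hxmax y hyP) hr.le
  · rintro ⟨⟨x, hxP, rfl⟩, hmax⟩
    refine ⟨x, ?_, rfl⟩
    rw [hFc]
    refine ⟨hxP, fun y hy => ?_⟩
    have := hmax (r • y) ⟨y, hy, rfl⟩
    rw [sum_mul_smul, sum_mul_smul] at this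
    exact le_of_mul_le_mul_left this hr

lemma IsFaceOf.of_smul {G : Set (Fin D → ℝ)} {r : ℝ} (hr : 0 < r)
    (h : IsFaceOf G (r • P)) : ∃ F, IsFaceOf F P ∧ G = r • F := by
  refine ⟨r⁻¹ • G, ?_, ?_⟩
  · have := h.smul (inv_pos.2 hr)
    rwa [smul_smul, inv_mul_cancel₀ hr.ne', one_smul] at this
  · rw [smul_smul, mul_inv_cancel₀ hr.ne', one_smul]

/-- Scaling an integral polytope by a natural number. -/
lemma IsIntegralPolytope.smul (hP : IsIntegralPolytope P) (t : ℕ) :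
    IsIntegralPolytope ((t : ℝ) • P) := by
  classical
  obtain ⟨V, hVne, hint, hV⟩ := hP
  refine ⟨V.image (fun x => (t : ℝ) • x), hVne.image _, ?_, ?_⟩
  · intro x hx i
    rw [Finset.mem_image] at hx
    obtain ⟨v, hv, rfl⟩ := hx
    obtain ⟨z, hz⟩ := hint v hv i
    exact ⟨t * z, by simp only [Pi.smul_apply, smul_eq_mul, hz]; push_cast; ring⟩
  · rw [hV, ← convexHull_smul]
    congr 1
    rw [Finset.coe_image]
    rfl

lemma vectorSpan_smul (F : Set (Fin D → ℝ)) {r : ℝ} (hr : r ≠ 0) :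
    vectorSpan ℝ (r • F) = vectorSpan ℝ F := by
  unfold vectorSpan
  have : (r • F) -ᵥ (r • F) = r • (F -ᵥ F) := by
    ext x
    simp only [Set.mem_vsub, vsub_eq_sub, Set.mem_smul_set]
    constructor
    · rintro ⟨a, ⟨a', ha', rfl⟩, b, ⟨b', hb', rfl⟩, rfl⟩
      exact ⟨a' - b', ⟨a', ha', b', hb', rfl⟩, smul_sub r a' b'⟩
    · rintro ⟨y, ⟨a', ha', b', hb', rfl⟩, rfl⟩
      exact ⟨r • a', ⟨a', ha', rfl⟩, r • b', ⟨b', hb', rfl⟩, (smul_sub r a' b').symm⟩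
  rw [this, Submodule.span_smul_eq_of_isUnit _ _ (isUnit_iff_ne_zero.2 hr)]

lemma polyDim_smul (F : Set (Fin D → ℝ)) {r : ℝ} (hr : r ≠ 0) :
    polyDim (r • F) = polyDim F := by
  unfold polyDim
  rw [vectorSpan_smul F hr]

lemma polyDim_mono (h : F ⊆ P) : polyDim F ≤ polyDim P :=
  Submodule.finrank_mono (vectorSpan_mono ℝ h)


variable {D : ℕ} {F : Set (Fin D → ℝ)}

/-- The integral points of a subspace, as a ℤ-submodule. -/
def intLat (W : Submodule ℝ (Fin D → ℝ)) : Submodule ℤ W where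
  carrier := {w : W | ∀ i, ∃ z : ℤ, (w : Fin D → ℝ) i = (z : ℝ)}
  add_mem' := by
    rintro a b ha hb i
    obtain ⟨za, hza⟩ := ha i
    obtain ⟨zb, hzb⟩ := hb i
    exact ⟨za + zb, by push_cast [Submodule.coe_add, Pi.add_apply, hza, hzb]; ring⟩
  zero_mem' := fun i => ⟨0, by simp⟩
  smul_mem' := by
    rintro c a ha i
    obtain ⟨za, hza⟩ := ha i
    refine ⟨c * za, ?_⟩
    have : ((c • a : W) : Fin D → ℝ) i = (c : ℝ) • ((a : W) : Fin D → ℝ) i := by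
      simp [Submodule.coe_smul_of_tower]
    rw [this, hza, smul_eq_mul]
    push_cast
    ring

lemma intLat_discrete (W : Submodule ℝ (Fin D → ℝ)) : DiscreteTopology (intLat W) := by
  rw [discreteTopology_iff_isOpen_singleton]
  intro a
  have : {a} = (Subtype.val : intLat W → W) ⁻¹' Metric.ball (a : W) 1 := by
    ext b
    simp only [Set.mem_singleton_iff, Set.mem_preimage, Metric.mem_ball]
    constructor
    · rintro rfl; simp
    · intro hb
      have hint : ∀ i, ∃ z : ℤ, ((b : W) : Fin D → ℝ) i - ((a : W) : Fin D → ℝ) i = (z : ℝ) := by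
        intro i
        obtain ⟨zb, hzb⟩ := b.2 i
        obtain ⟨za, hza⟩ := a.2 i
        exact ⟨zb - za, by rw [hzb, hza]; push_cast; ring⟩
      have hco : ∀ i, ((b : W) : Fin D → ℝ) i = ((a : W) : Fin D → ℝ) i := by
        intro i
        obtain ⟨z, hz⟩ := hint i
        by_contra hne
        have hz0 : z ≠ 0 := by
          rintro rfl
          rw [Int.cast_zero] at hz
          exact hne (sub_eq_zero.1 hz)
        have h1 : (1 : ℝ) ≤ |(z : ℝ)| := by
          rw [← Int.cast_abs]
          exact_mod_cast Int.one_le_abs hz0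
        have h2 : |(z : ℝ)| ≤ ‖((b : W) : Fin D → ℝ) - ((a : W) : Fin D → ℝ)‖ := by
          rw [← hz]
          exact (norm_le_pi_norm (((b : W) : Fin D → ℝ) - ((a : W) : Fin D → ℝ)) i).trans_eq' (by simp [Real.norm_eq_abs])
        have h3 : ‖((b : W) : Fin D → ℝ) - ((a : W) : Fin D → ℝ)‖ = dist (b : W) (a : W) := by
          rw [dist_eq_norm]
          rfl
        linarith
      apply Subtype.ext
      apply Subtype.ext
      exact funext hco
  rw [this]
  exact continuous_subtype_val.isOpen_preimage _ Metric.isOpen_ball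

lemma integral_sub_integral {x y : Fin D → ℝ} (hx : ∀ i, ∃ z : ℤ, x i = (z : ℝ))
    (hy : ∀ i, ∃ z : ℤ, y i = (z : ℝ)) (i : Fin D) : ∃ z : ℤ, (x - y) i = (z : ℝ) := by
  obtain ⟨zx, hzx⟩ := hx i
  obtain ⟨zy, hzy⟩ := hy i
  exact ⟨zx - zy, by simp [hzx, hzy]⟩

/-- Main convergence: for an integral polytope, `Lat(sF)/s^dim F` converges. -/
lemma exists_tendsto (hF : IsIntegralPolytope F) :
    ∃ L : ℝ, Tendsto (fun s : ℕ => (latticePts ((s:ℝ) • F) : ℝ) / (s:ℝ) ^ polyDim F)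
      atTop (nhds L) := by
  classical
  obtain ⟨V, ⟨v₀, hv₀⟩, hint, hVF⟩ := hF
  set W : Submodule ℝ (Fin D → ℝ) := vectorSpan ℝ F with hW
  have hv₀F : v₀ ∈ F := hVF ▸ subset_convexHull ℝ (V : Set (Fin D → ℝ)) hv₀
  have hFconv : Convex ℝ F := hVF ▸ convex_convexHull ℝ _
  have hFcomp : IsCompact F := hVF ▸ V.finite_toSet.isCompact_convexHull (𝕜 := ℝ)
  -- W is spanned by the differences of vertices
  have hWspan : W = Submodule.span ℝ ((fun v => v - v₀) '' (V : Set (Fin D → ℝ))) := by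
    rw [hW, ← direction_affineSpan, hVF, affineSpan_convexHull, direction_affineSpan,
      vectorSpan_eq_span_vsub_set_right ℝ (Finset.mem_coe.2 hv₀)]
    rfl
  have hsub_mem : ∀ x ∈ F, x - v₀ ∈ W := fun x hx => vsub_mem_vectorSpan ℝ hx hv₀F
  -- the lattice
  set Λ : Submodule ℤ W := intLat W with hΛ
  haveI : DiscreteTopology Λ := intLat_discrete W
  haveI : IsZLattice ℝ Λ := by
    constructor
    have hmap : Submodule.map W.subtype (Submodule.span ℝ (Λ : Set W)) = W := by
      rw [Submodule.map_span]
      apply le_antisymm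
      · rw [Submodule.span_le]
        rintro x ⟨y, hy, rfl⟩
        exact y.2
      · conv_lhs => rw [hWspan]
        rw [Submodule.span_le]
        rintro x ⟨v, hv, rfl⟩
        apply Submodule.subset_span
        have hvW : v - v₀ ∈ W := hsub_mem v (hVF ▸ subset_convexHull ℝ _ hv)
        refine ⟨⟨v - v₀, hvW⟩, ?_, rfl⟩
        exact integral_sub_integral (hint v hv) (hint v₀ hv₀)
    apply Submodule.map_injective_of_injective (Submodule.injective_subtype W)
    rw [hmap, Submodule.map_top, Submodule.range_subtype]
  haveI : Module.Finite ℤ Λ := ZLattice.module_finite ℝ Λ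
  haveI : Module.Free ℤ Λ := ZLattice.module_free ℝ Λ
  set n : ℕ := Module.finrank ℤ Λ with hn
  have hnd : n = polyDim F := by rw [hn, ZLattice.rank ℝ Λ]; rfl
  set b : Module.Basis (Fin n) ℤ Λ := Module.finBasis ℤ Λ with hb
  set B : Module.Basis (Fin n) ℝ W := b.ofZLatticeBasis ℝ Λ with hB
  -- membership in the lattice via integer coordinates
  have hrepr : ∀ w : W, w ∈ Λ ↔ ∀ i, ∃ z : ℤ, B.repr w i = (z : ℝ) := by
    intro w
    rw [← b.ofZLatticeBasis_span ℝ, B.mem_span_iff_repr_mem ℤ]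
    simp only [Set.mem_range]
    constructor
    · intro h i
      obtain ⟨z, hz⟩ := h i
      exact ⟨z, by rw [← hz]; rfl⟩
    · intro h i
      obtain ⟨z, hz⟩ := h i
      exact ⟨z, by rw [hz]; rfl⟩
  -- the body in coordinates
  set KW : Set W := {w : W | (w : Fin D → ℝ) + v₀ ∈ F} with hKW
  set K' : Set (Fin n → ℝ) := ⇑B.equivFun '' KW with hK'
  have hKWconv : Convex ℝ KW := by
    intro w1 h1 w2 h2 a c ha hc hac
    rw [hKW, Set.mem_setOf_eq]
    have := hFconv h1 h2 ha hc hac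
    have heq : ((a • w1 + c • w2 : W) : Fin D → ℝ) + v₀
        = a • ((w1 : Fin D → ℝ) + v₀) + c • ((w2 : Fin D → ℝ) + v₀) := by
      push_cast
      rw [smul_add, smul_add]
      have h4 : a • v₀ + c • v₀ = v₀ := by rw [← add_smul, hac, one_smul]
      conv_lhs => rw [← h4]
      abel
    rw [heq]
    exact this
  have hKWcomp : IsCompact KW := by
    have hC : IsCompact ((fun x => x - v₀) '' F) :=
      hFcomp.image (continuous_id.sub continuous_const)
    have hKWeq : KW = (Subtype.val : W → Fin D → ℝ) ⁻¹' ((fun x => x - v₀) '' F) := by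
      ext w
      simp only [hKW, Set.mem_setOf_eq, Set.mem_preimage, Set.mem_image]
      constructor
      · intro h; exact ⟨(w : Fin D → ℝ) + v₀, h, by ring⟩
      · rintro ⟨x, hx, hxe⟩
        have : (w : Fin D → ℝ) = x - v₀ := hxe.symm
        rw [this]
        simpa using hx
    rw [hKWeq]
    have hWclosed : IsClosed (W : Set (Fin D → ℝ)) := Submodule.closed_of_finiteDimensional W
    exact (hWclosed.isClosedEmbedding_subtypeVal.isCompact_preimage (by simpa using hC))
  have hK'conv : Convex ℝ K' :=
    hKWconv.linear_image (B.equivFun : W →ₗ[ℝ] (Fin n → ℝ))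
  have hK'comp : IsCompact K' :=
    hKWcomp.image (LinearMap.continuous_of_finiteDimensional
      (B.equivFun : W →ₗ[ℝ] (Fin n → ℝ)))
  refine ⟨(volume K').toReal, ?_⟩
  have hA := lemmaA hK'conv hK'comp
  rw [← hnd]
  apply hA.congr'
  filter_upwards [eventually_ge_atTop 1] with s hs
  have hs' : (0:ℝ) < s := by exact_mod_cast hs
  -- the counting bijection
  set S1 : Set (Fin D → ℤ) := {z | (fun i => (z i : ℝ)) ∈ (s:ℝ) • F} with hS1
  set S2 : Set (Fin n → ℤ) := {y | (fun i => (y i : ℝ)) ∈ (s:ℝ) • K'} with hS2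
  set wmap : (Fin D → ℤ) → W := fun z =>
    if h : ((fun i => (z i : ℝ)) - (s:ℝ) • v₀) ∈ W then ⟨_, h⟩ else 0 with hwmap
  set f : (Fin D → ℤ) → (Fin n → ℤ) := fun z => fun i => ⌊B.repr (wmap z) i⌋ with hf
  -- basic facts for z ∈ S1
  have hfact : ∀ z ∈ S1, ((wmap z : Fin D → ℝ) = (fun i => (z i : ℝ)) - (s:ℝ) • v₀)
      ∧ wmap z ∈ Λ ∧ wmap z ∈ (s:ℝ) • KW := by
    intro z hz
    rw [hS1, Set.mem_setOf_eq] at hz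
    obtain ⟨x, hxF, hxz0⟩ := hz
    have hxz : (s:ℝ) • x = (fun i => (z i : ℝ)) := hxz0
    have hwW : ((fun i => (z i : ℝ)) - (s:ℝ) • v₀) ∈ W := by
      rw [← hxz, ← smul_sub]
      exact Submodule.smul_mem _ _ (hsub_mem x hxF)
    have hwz : wmap z = ⟨_, hwW⟩ := dif_pos hwW
    refine ⟨by rw [hwz], ?_, ?_⟩
    · rw [hwz]
      intro i
      obtain ⟨ζ, hζ⟩ := hint v₀ hv₀ i
      refine ⟨z i - s * ζ, ?_⟩
      show (z i : ℝ) - ((s:ℝ) • v₀) i = _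
      rw [Pi.smul_apply, smul_eq_mul, hζ]
      push_cast
      ring
    · rw [hwz]
      refine ⟨⟨x - v₀, hsub_mem x hxF⟩, ?_, ?_⟩
      · show (x - v₀) + v₀ ∈ F
        rw [sub_add_cancel]
        exact hxF
      · apply Subtype.ext
        show (s:ℝ) • (x - v₀) = (fun i => (z i : ℝ)) - (s:ℝ) • v₀
        rw [smul_sub, hxz]
    -- integral coordinates of wmap z
  have hcast : ∀ z ∈ S1, (fun i => ((f z i : ℤ) : ℝ)) = B.equivFun (wmap z) := by
    intro z hz
    obtain ⟨-, hΛmem, -⟩ := hfact z hz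
    funext i
    obtain ⟨zz, hzz⟩ := (hrepr _).1 hΛmem i
    rw [hf]
    show ((⌊B.repr (wmap z) i⌋ : ℤ) : ℝ) = B.equivFun (wmap z) i
    rw [hzz, Int.floor_intCast, B.equivFun_apply, hzz]
  have himage : f '' S1 = S2 := by
    apply Set.Subset.antisymm
    · rintro y ⟨z, hz, rfl⟩
      rw [hS2, Set.mem_setOf_eq]
      obtain ⟨-, -, hsKW⟩ := hfact z hz
      obtain ⟨u, huKW, huw0⟩ := hsKW
      have huw : (s:ℝ) • u = wmap z := huw0
      rw [hcast z hz, ← huw, _root_.map_smul]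
      exact Set.smul_mem_smul_set (Set.mem_image_of_mem _ huKW)
    · intro y hy
      rw [hS2, Set.mem_setOf_eq] at hy
      obtain ⟨k', hk', hky0⟩ := hy
      obtain ⟨u, huKW, rfl⟩ := hk'
      have hky : (s:ℝ) • (B.equivFun u) = (fun i => (y i : ℝ)) := hky0
      set w : W := (s:ℝ) • u with hwdef
      have hweq : B.equivFun w = (fun i => (y i : ℝ)) := by
        rw [hwdef, _root_.map_smul, hky]
      have hwΛ : w ∈ Λ := by
        rw [hrepr]
        intro i
        refine ⟨y i, ?_⟩
        rw [← B.equivFun_apply, hweq]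
      have hwint : ∀ i, ∃ zz : ℤ, (w : Fin D → ℝ) i = (zz : ℝ) := hwΛ
      have hxint : ∀ i, ∃ zz : ℤ, ((w : Fin D → ℝ) + (s:ℝ) • v₀) i = (zz : ℝ) := by
        intro i
        obtain ⟨z1, hz1⟩ := hwint i
        obtain ⟨ζ, hζ⟩ := hint v₀ hv₀ i
        refine ⟨z1 + s * ζ, ?_⟩
        rw [Pi.add_apply, Pi.smul_apply, smul_eq_mul, hz1, hζ]
        push_cast
        ring
      set z : Fin D → ℤ := fun i => Classical.choose (hxint i) with hz
      have hzspec : (fun i => (z i : ℝ)) = (w : Fin D → ℝ) + (s:ℝ) • v₀ :=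
        funext fun i => (Classical.choose_spec (hxint i)).symm
      have hzS1 : z ∈ S1 := by
        rw [hS1, Set.mem_setOf_eq, hzspec]
        refine ⟨(u : Fin D → ℝ) + v₀, huKW, ?_⟩
        show (s:ℝ) • ((u : Fin D → ℝ) + v₀) = (w : Fin D → ℝ) + (s:ℝ) • v₀
        have hcw : (w : Fin D → ℝ) = (s:ℝ) • (u : Fin D → ℝ) := rfl
        rw [hcw, ← smul_add]
      have hwmapz : wmap z = w := by
        have hmem : ((fun i => (z i : ℝ)) - (s:ℝ) • v₀) ∈ W := by
          rw [hzspec, add_sub_cancel_right]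
          exact w.2
        apply Subtype.ext
        rw [hwmap]
        show (if h : _ then (⟨_, h⟩ : W) else 0 : W).val = _
        rw [dif_pos hmem]
        show (fun i => (z i : ℝ)) - (s:ℝ) • v₀ = (w : Fin D → ℝ)
        rw [hzspec, add_sub_cancel_right]
      refine ⟨z, hzS1, ?_⟩
      funext i
      rw [hf]
      show ⌊B.repr (wmap z) i⌋ = y i
      rw [hwmapz, ← B.equivFun_apply, hweq]
      exact Int.floor_intCast _
  have hinj : Set.InjOn f S1 := by
    intro z hz z' hz' hff
    have h1 := hcast z hz
    have h2 := hcast z' hz'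
    rw [hff] at h1
    have hww : wmap z = wmap z' := B.equivFun.injective (h1.symm.trans h2)
    obtain ⟨e1, -, -⟩ := hfact z hz
    obtain ⟨e2, -, -⟩ := hfact z' hz'
    have : (fun i => (z i : ℝ)) - (s:ℝ) • v₀ = (fun i => (z' i : ℝ)) - (s:ℝ) • v₀ := by
      rw [← e1, ← e2, hww]
    have hce : (fun i => (z i : ℝ)) = (fun i => (z' i : ℝ)) := by
      have := congrArg (· + (s:ℝ) • v₀) this
      simpa [sub_add_cancel] using this
    funext i
    exact_mod_cast congrFun hce i
  have hcount : latticePts ((s:ℝ) • F) = latticePts ((s:ℝ) • K') := by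
    show S1.ncard = S2.ncard
    rw [← himage, Set.ncard_image_of_injOn hinj]
  rw [hcount]


lemma nvol_tendsto (hF : IsIntegralPolytope F) :
    Tendsto (fun s : ℕ => (latticePts ((s:ℝ) • F) : ℝ) / (s:ℝ) ^ polyDim F)
      atTop (nhds (nvol F)) := by
  obtain ⟨L, hL⟩ := exists_tendsto hF
  have : nvol F = L := hL.limUnder_eq
  rw [this]
  exact hL

lemma nvol_smul (hF : IsIntegralPolytope F) {t : ℕ} (ht : 1 ≤ t) :
    nvol ((t:ℝ) • F) = (t:ℝ) ^ polyDim F * nvol F := by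
  have ht' : (0:ℝ) < t := by exact_mod_cast ht
  have h := nvol_tendsto hF
  have hdim : polyDim ((t:ℝ) • F) = polyDim F := polyDim_smul F ht'.ne'
  have hmul : Tendsto (fun s : ℕ => s * t) atTop atTop :=
    Filter.tendsto_atTop_atTop.2 fun b =>
      ⟨b, fun a ha => le_trans ha (Nat.le_mul_of_pos_right a (by omega))⟩
  have hcomp := h.comp hmul
  have h2 := hcomp.const_mul ((t:ℝ) ^ polyDim F)
  rw [nvol, hdim]
  apply Filter.Tendsto.limUnder_eq
  apply h2.congr'
  filter_upwards [eventually_ge_atTop 1] with s hs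
  have hs' : (0:ℝ) < s := by exact_mod_cast hs
  simp only [Function.comp_apply]
  have e1 : (s:ℝ) • ((t:ℝ) • F) = (((s * t : ℕ) : ℝ)) • F := by
    rw [smul_smul]
    push_cast
    ring_nf
  rw [← e1]
  have e2 : ((s * t : ℕ) : ℝ) ^ polyDim F = (s:ℝ) ^ polyDim F * (t:ℝ) ^ polyDim F := by
    push_cast
    rw [mul_pow]
  rw [e2]
  field_simp


end Aux

/-- If `α` satisfies McMullen's formula and is invariant under dilation
(`α(tF,tP) = α(F,P)` for positive integers `t`), then for every nonempty integral
polytope `P` and `t ≥ 1`, `Lat(tP) = Σ_{k=0}^{dim P} c_k t^k` with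
`c_k = Σ_{F a k-dimensional face of P} α(F,P)·nvol(F)`. -/
theorem mcmullen_ehrhart_expansion {D : ℕ}
    (α : Set (Fin D → ℝ) → Set (Fin D → ℝ) → ℝ)
    (hMc : ∀ Q : Set (Fin D → ℝ), IsIntegralPolytope Q →
      (latticePts Q : ℝ) = ∑ᶠ F ∈ {F | IsFaceOf F Q}, α F Q * nvol F)
    (hdil : ∀ t : ℕ, 0 < t → ∀ P F : Set (Fin D → ℝ),
      IsIntegralPolytope P → IsFaceOf F P → α ((t : ℝ) • F) ((t : ℝ) • P) = α F P)
    (P : Set (Fin D → ℝ)) (hP : IsIntegralPolytope P) :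
    ∀ t : ℕ, 1 ≤ t →
      (latticePts ((t : ℝ) • P) : ℝ) =
        ∑ k ∈ Finset.range (polyDim P + 1),
          (∑ᶠ F ∈ {F | IsFaceOf F P ∧ polyDim F = k}, α F P * nvol F) * (t : ℝ) ^ k := by
  classical
  intro t ht
  have ht' : (0:ℝ) < t := by exact_mod_cast ht
  have hfin := facesFinite hP
  have h0 := hMc ((t:ℝ) • P) (hP.smul t)
  have himg : {G | IsFaceOf G ((t:ℝ) • P)} = (fun F => (t:ℝ) • F) '' {F | IsFaceOf F P} := by
    ext G
    simp only [Set.mem_setOf_eq, Set.mem_image]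
    constructor
    · intro hG
      obtain ⟨F, hF, rfl⟩ := hG.of_smul ht'
      exact ⟨F, hF, rfl⟩
    · rintro ⟨F, hF, rfl⟩
      exact hF.smul ht'
  have hinj : Set.InjOn (fun F => (t:ℝ) • F) {F | IsFaceOf F P} := by
    intro F1 _ F2 _ h
    have := congrArg (fun S => (t:ℝ)⁻¹ • S) h
    simpa [smul_smul, inv_mul_cancel₀ ht'.ne'] using this
  rw [himg, finsum_mem_image hinj] at h0
  have hterm : ∀ F ∈ {F | IsFaceOf F P},
      α ((t:ℝ) • F) ((t:ℝ) • P) * nvol ((t:ℝ) • F)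
        = α F P * nvol F * (t:ℝ) ^ polyDim F := by
    intro F hF
    rw [hdil t (by omega) P F hP hF, nvol_smul (hF.isIntegralPolytope hP) ht]
    ring
  rw [finsum_mem_congr rfl hterm] at h0
  rw [h0]
  have hcoe : {F | IsFaceOf F P} = (hfin.toFinset : Set (Set (Fin D → ℝ))) := by
    rw [Set.Finite.coe_toFinset]
  rw [hcoe, finsum_mem_coe_finset]
  rw [← Finset.sum_fiberwise_of_maps_to (g := polyDim) (t := Finset.range (polyDim P + 1))
    (fun F hF => Finset.mem_range.2 (Nat.lt_succ_of_le
      (polyDim_mono ((hfin.mem_toFinset.1 hF).subset))))]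
  apply Finset.sum_congr rfl
  intro k hk
  have hset : {F | IsFaceOf F P ∧ polyDim F = k}
      = ((hfin.toFinset.filter (fun F => polyDim F = k) : Finset (Set (Fin D → ℝ)))
          : Set (Set (Fin D → ℝ))) := by
    ext F
    simp only [Set.mem_setOf_eq, Finset.coe_filter, Set.Finite.mem_toFinset, Set.mem_setOf_eq]
  rw [hset, finsum_mem_coe_finset, Finset.sum_mul]
  apply Finset.sum_congr rfl
  intro F hF
  rw [Finset.mem_filter] at hF
  rw [hF.2]
end
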